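/- Let n ≥ 2 and let G be a group with a, b ∈ G satisfying b a b^{-1} = a^{2^{n−1} − 1} (as holds in the semidihedral group of order 2^{n+1}). Then for every ℓ ≥ 2, all integers α_1,…,α_ℓ and all β_1,…,β_ℓ ∈ {0,1}, the left-normed commutator satisfies [a^{α_1} b^{β_1}, …, a^{α_ℓ} b^{β_ℓ}] = a^{2^{ℓ−1}(1 − 2^{n−2})^{ℓ−1}·β_3 ⋯ β_ℓ·(α_1 β_2 − α_2 β_1)}. -/

import Mathlib

open scoped commutatorElement

/-- The left-normed commutator `[x₁, x₂, …, x_ℓ] = [[x₁, …, x_{ℓ-1}], x_ℓ]`,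
with the conventions that the empty list gives `1` and a singleton gives its
entry. -/
def leftNormedCommutator {G : Type*} [Group G] : List G → G
  | [] => 1
  | x :: xs => xs.foldl (fun acc y => ⁅acc, y⁆) x

/-- Let `n ≥ 2` and suppose `b a b⁻¹ = a^(2^{n−1} − 1)` (as in
the semidihedral group of order `2^{n+1}`). Then for `ℓ ≥ 2` and
`β₁, …, β_ℓ ∈ {0,1}`,
`[a^α₁ b^β₁, …, a^α_ℓ b^β_ℓ]
  = a^(2^{ℓ−1}(1 − 2^{n−2})^{ℓ−1}·β₃⋯β_ℓ·(α₁β₂ − α₂β₁))`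
(indices shifted to start at `0`). -/
theorem leftNormedCommutator_semidihedral
    {G : Type*} [Group G] (a b : G) (n : ℕ) (hn : 2 ≤ n)
    (h : b * a * b⁻¹ = a ^ ((2 : ℤ) ^ (n - 1) - 1))
    (ℓ : ℕ) (hℓ : 2 ≤ ℓ) (α : ℕ → ℤ) (β : ℕ → ℕ)
    (hβ : ∀ i, β i = 0 ∨ β i = 1) :
    leftNormedCommutator ((List.range ℓ).map fun i => a ^ α i * b ^ β i)
      = a ^ ((2 : ℤ) ^ (ℓ - 1) * (1 - (2 : ℤ) ^ (n - 2)) ^ (ℓ - 1) *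
          (∏ i ∈ Finset.Ico 2 ℓ, (β i : ℤ)) *
          (α 0 * (β 1 : ℤ) - α 1 * (β 0 : ℤ))) := by
  set m : ℤ := (2 : ℤ) ^ (n - 1) - 1 with hm
  set c : ℤ := 1 - (2 : ℤ) ^ (n - 2) with hc'
  have h2c : 1 - m = 2 * c := by
    have h2 : (2 : ℤ) ^ (n - 1) = 2 ^ (n - 2) * 2 := by
      rw [show n - 1 = n - 2 + 1 by omega, pow_succ]
    rw [hm, hc', h2]; ring
  have hconj : ∀ k : ℤ, b * a ^ k * b⁻¹ = a ^ (m * k) := by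
    intro k; rw [← conj_zpow, h, ← zpow_mul]
  have hb : ∀ k : ℤ, b * a ^ k = a ^ (m * k) * b := by
    intro k; rw [← hconj k]; group
  have key : ∀ x y z : G, x * y = z * (y * x) → ⁅x, y⁆ = z := by
    intro x y z hxy
    rw [commutatorElement_def, hxy]; group
  -- the basic commutator computation
  have base : ∀ (p q : ℤ) (s t : ℕ), (s = 0 ∨ s = 1) → (t = 0 ∨ t = 1) →
      ⁅a ^ p * b ^ s, a ^ q * b ^ t⁆ = a ^ ((1 - m) * (p * t - q * s)) := by
    intro p q s t hs ht
    rcases hs with hs | hs <;> rcases ht with ht | ht <;> subst hs <;> subst ht <;>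
      simp only [pow_zero, pow_one, Nat.cast_zero, Nat.cast_one]
    · rw [show (1 - m) * (p * 0 - q * 0) = 0 by ring, zpow_zero, commutatorElement_def]
      group
    · rw [show (1 - m) * (p * 1 - q * 0) = (1 - m) * p by ring]
      apply key
      calc a ^ p * 1 * (a ^ q * b) = a ^ ((1 - m) * p + (q + m * p)) * b := by
            rw [show (1 - m) * p + (q + m * p) = p + q by ring]; group
        _ = a ^ ((1 - m) * p) * (a ^ q * (b * a ^ p)) := by rw [hb]; group
        _ = a ^ ((1 - m) * p) * (a ^ q * b * (a ^ p * 1)) := by group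
    · rw [show (1 - m) * (p * 0 - q * 1) = (1 - m) * (-q) by ring]
      apply key
      calc a ^ p * b * (a ^ q * 1) = a ^ p * (b * a ^ q) := by group
        _ = a ^ ((1 - m) * (-q) + (q + p)) * b := by
            rw [hb, show (1 - m) * (-q) + (q + p) = p + m * q by ring]; group
        _ = a ^ ((1 - m) * (-q)) * (a ^ q * 1 * (a ^ p * b)) := by group
    · rw [show (1 - m) * (p * 1 - q * 1) = (1 - m) * (p - q) by ring]
      apply key
      calc a ^ p * b * (a ^ q * b) = a ^ p * (b * a ^ q) * b := by group
        _ = a ^ p * (a ^ (m * q) * b) * b := by rw [hb]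
        _ = a ^ ((1 - m) * (p - q) + (q + m * p)) * (b * b) := by
            rw [show (1 - m) * (p - q) + (q + m * p) = p + m * q by ring]; group
        _ = a ^ ((1 - m) * (p - q)) * (a ^ q * (b * a ^ p) * b) := by
            rw [hb]; group
        _ = a ^ ((1 - m) * (p - q)) * (a ^ q * b * (a ^ p * b)) := by group
  -- concat lemma
  have concat : ∀ (x y : G) (xs : List G),
      leftNormedCommutator ((x :: xs) ++ [y]) = ⁅leftNormedCommutator (x :: xs), y⁆ := by
    intro x y xs
    simp [leftNormedCommutator, List.foldl_append]
  set f : ℕ → G := fun i => a ^ α i * b ^ β i with hf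
  set D : ℤ := α 0 * (β 1 : ℤ) - α 1 * (β 0 : ℤ) with hD
  have main : ∀ L, 2 ≤ L →
      leftNormedCommutator ((List.range L).map f)
        = a ^ ((1 - m) ^ (L - 1) * (∏ i ∈ Finset.Ico 2 L, (β i : ℤ)) * D) := by
    intro L hL
    induction L, hL using Nat.le_induction with
    | base =>
      have h2 : (List.range 2).map f = [f 0, f 1] := rfl
      rw [h2]
      show ⁅f 0, f 1⁆ = _
      rw [hf]
      rw [base (α 0) (α 1) (β 0) (β 1) (hβ 0) (hβ 1)]
      congr 1
      simp [hD]
    | succ L hL ih =>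
      have hrs : (List.range (L + 1)).map f = (List.range L).map f ++ [f L] := by
        rw [List.range_succ, List.map_append]; rfl
      obtain ⟨x, xs, hx⟩ : ∃ x xs, (List.range L).map f = x :: xs :=
        List.exists_cons_of_ne_nil (by simp; omega)
      rw [hrs, hx, concat, ← hx, ih]
      have hbase := base ((1 - m) ^ (L - 1) * (∏ i ∈ Finset.Ico 2 L, (β i : ℤ)) * D)
        (α L) 0 (β L) (Or.inl rfl) (hβ L)
      rw [pow_zero, mul_one] at hbase
      show ⁅_, f L⁆ = _
      rw [hf, hbase]
      have hprod : (∏ i ∈ Finset.Ico 2 (L + 1), (β i : ℤ))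
          = (∏ i ∈ Finset.Ico 2 L, (β i : ℤ)) * (β L : ℤ) :=
        Finset.prod_Ico_succ_top (by omega) _
      rw [hprod, show L + 1 - 1 = (L - 1) + 1 by omega, pow_succ]
      congr 1
      push_cast
      ring
  rw [main ℓ hℓ]
  congr 2
  rw [h2c, mul_pow]
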